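/- Let $\phi : R_{m-1}^W \to d(R_m)$ be the map $g \mapsto d(X_1 g)$, where $R_{m-1}^W$ is spanned by the monomial symmetric functions $m_{ij}$ with $0 \le i \le j \le m-2$. For $j \le m-2$: $\phi(m_{ij}) = -X_1^i X_2^{j+1}$ if $j - i \le 1$, and $\phi(m_{ij}) = -X_1^i X_2^{j+1} + X_1^{i+1} X_2^{j}$ if $j - i > 1$. Consequently $\phi|_{R_{m-1}^W}$ is an isomorphism of $A$-modules onto $d(R_m)$, the span of $\{X_1^i X_2^j : 0 \le i < j \le m-1\}$. -/

import Mathlib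

noncomputable section

/-- The Laurent polynomial ring `A[X₁^{±1}, X₂^{±1}]`. -/
abbrev Lau (A : Type) [CommRing A] : Type := AddMonoidAlgebra A (ℤ × ℤ)

variable (A : Type) [CommRing A]

/-- The monomial `X₁^i X₂^j`. -/
def Xm (i j : ℤ) : Lau A := AddMonoidAlgebra.single (i, j) 1

/-- The monomial symmetric functions `m_{ij}`. -/
def msf (i j : ℤ) : Lau A := if i = j then Xm A i i else Xm A i j + Xm A j i


lemma Xm_mul (a b i j : ℤ) : Xm A a b * Xm A i j = Xm A (a + i) (b + j) := by
  simp [Xm, AddMonoidAlgebra.single_mul_single, Prod.mk_add_mk]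

lemma phi_msf (d : Lau A →ₗ[A] Lau A)
    (hd : ∀ i j : ℤ, d (Xm A i j) =
      if i < j then Xm A i j else if j < i then -Xm A j i else 0)
    (i j : ℤ) (hij : i ≤ j) :
    d (Xm A 1 0 * msf A i j) =
      if j - i ≤ 1 then -Xm A i (j + 1) else -Xm A i (j + 1) + Xm A (i + 1) j := by
  rcases eq_or_lt_of_le hij with rfl | h
  · rw [msf, if_pos rfl, Xm_mul, hd]
    split_ifs <;> first
      | (exfalso; omega)
      | (simp only [zero_add, add_comm (1:ℤ)]; try abel)
  · rw [msf, if_neg (by omega), mul_add, map_add, Xm_mul, Xm_mul, hd, hd]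
    split_ifs <;> first
      | (exfalso; omega)
      | (simp only [zero_add, add_comm (1:ℤ)]; try abel)

/-- Inverse images of the monomials under φ. -/
def psiMono (i j : ℤ) : Lau A :=
  if i < j then -msf A i (j-1) + psiMono (i+1) (j-1) else 0
termination_by (j - i).toNat
decreasing_by omega

lemma psiMono_eq (i j : ℤ) : psiMono A i j =
    if i < j then -msf A i (j-1) + psiMono A (i+1) (j-1) else 0 := by
  rw [psiMono]

/-- The candidate inverse of φ, as a linear map. -/
def psi : Lau A →ₗ[A] Lau A :=
  (Finsupp.lsum A fun p : ℤ × ℤ => LinearMap.toSpanSingleton A (Lau A) (psiMono A p.1 p.2)) ∘ₗ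
    (AddMonoidAlgebra.coeffLinearEquiv A).toLinearMap

lemma psi_Xm (i j : ℤ) : psi A (Xm A i j) = psiMono A i j := by
  rw [psi, Xm, LinearMap.comp_apply, LinearEquiv.coe_coe, AddMonoidAlgebra.coeffLinearEquiv_apply,
    AddMonoidAlgebra.coeff_single]; erw [Finsupp.lsum_single]; simp

lemma phi_psi (d : Lau A →ₗ[A] Lau A)
    (hd : ∀ i j : ℤ, d (Xm A i j) =
      if i < j then Xm A i j else if j < i then -Xm A j i else 0) :
    ∀ n : ℕ, ∀ i j : ℤ, (j - i).toNat ≤ n → i < j →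
      d (Xm A 1 0 * psiMono A i j) = Xm A i j := by
  intro n
  induction n with
  | zero => intro i j h1 h2; omega
  | succ n ih =>
    intro i j h1 h2
    rw [psiMono_eq, if_pos h2, mul_add, mul_neg, map_add, map_neg,
      phi_msf A d hd i (j-1) (by omega)]
    rcases lt_or_ge (i+1) (j-1) with hlt | hle
    · rw [ih (i+1) (j-1) (by omega) hlt, if_neg (by omega)]
      simp only [sub_add_cancel]
      abel
    · rw [if_pos (show (j-1)-i ≤ 1 by omega), psiMono_eq A (i+1) (j-1),
        if_neg (show ¬(i+1 < j-1) by omega)]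
      simp only [sub_add_cancel, mul_zero, map_zero]
      abel

lemma psi_phi (d : Lau A →ₗ[A] Lau A)
    (hd : ∀ i j : ℤ, d (Xm A i j) =
      if i < j then Xm A i j else if j < i then -Xm A j i else 0)
    (i j : ℤ) (hij : i ≤ j) :
    psi A (d (Xm A 1 0 * msf A i j)) = msf A i j := by
  rw [phi_msf A d hd i j hij]
  split_ifs with h1
  · rw [map_neg, psi_Xm, psiMono_eq, if_pos (by omega), psiMono_eq, if_neg (by omega)]
    simp only [add_sub_cancel_right]
    abel
  · rw [map_add, map_neg, psi_Xm, psi_Xm, psiMono_eq A i (j+1), if_pos (by omega)]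
    simp only [add_sub_cancel_right]
    abel

lemma psiMono_mem (m : ℤ) : ∀ n : ℕ, ∀ i j : ℤ, (j - i).toNat ≤ n →
    0 ≤ i → i < j → j ≤ m - 1 →
    psiMono A i j ∈ Submodule.span A
      {p : Lau A | ∃ i j : ℤ, 0 ≤ i ∧ i ≤ j ∧ j ≤ m - 2 ∧ p = msf A i j} := by
  intro n
  induction n with
  | zero => intro i j h1 h2 h3; omega
  | succ n ih =>
    intro i j h1 h0 h2 h3
    rw [psiMono_eq, if_pos h2]
    refine add_mem (neg_mem (Submodule.subset_span ⟨i, j-1, h0, by omega, by omega, rfl⟩)) ?_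
    rcases lt_or_ge (i+1) (j-1) with hlt | hle
    · exact ih (i+1) (j-1) (by omega) (by omega) hlt (by omega)
    · rw [psiMono_eq, if_neg (by omega)]; exact zero_mem _

/- STATEMENT 6: values of φ(g) = d(X₁ g) on the monomial symmetric functions
m_{ij}, 0 ≤ i ≤ j ≤ m-2, and the resulting isomorphism of R_{m-1}^W onto
d(R_m) = span{X₁^i X₂^j : 0 ≤ i < j ≤ m-1}. -/
theorem stmt6 (m : ℕ) (d : Lau A →ₗ[A] Lau A)
    (hd : ∀ i j : ℤ, d (Xm A i j) =
      if i < j then Xm A i j else if j < i then -Xm A j i else 0) :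
    (∀ i j : ℤ, 0 ≤ i → i ≤ j → j ≤ (m : ℤ) - 2 →
      d (Xm A 1 0 * msf A i j) =
        if j - i ≤ 1 then -Xm A i (j + 1)
        else -Xm A i (j + 1) + Xm A (i + 1) j) ∧
    (∀ g ∈ Submodule.span A
        {p : Lau A | ∃ i j : ℤ, 0 ≤ i ∧ i ≤ j ∧ j ≤ (m : ℤ) - 2 ∧ p = msf A i j},
      d (Xm A 1 0 * g) ∈ Submodule.span A
        {p : Lau A | ∃ i j : ℤ, 0 ≤ i ∧ i < j ∧ j ≤ (m : ℤ) - 1 ∧ p = Xm A i j}) ∧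
    (∀ g ∈ Submodule.span A
        {p : Lau A | ∃ i j : ℤ, 0 ≤ i ∧ i ≤ j ∧ j ≤ (m : ℤ) - 2 ∧ p = msf A i j},
      ∀ g' ∈ Submodule.span A
        {p : Lau A | ∃ i j : ℤ, 0 ≤ i ∧ i ≤ j ∧ j ≤ (m : ℤ) - 2 ∧ p = msf A i j},
      d (Xm A 1 0 * g) = d (Xm A 1 0 * g') → g = g') ∧
    (∀ y ∈ Submodule.span A
        {p : Lau A | ∃ i j : ℤ, 0 ≤ i ∧ i < j ∧ j ≤ (m : ℤ) - 1 ∧ p = Xm A i j},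
      ∃ g ∈ Submodule.span A
        {p : Lau A | ∃ i j : ℤ, 0 ≤ i ∧ i ≤ j ∧ j ≤ (m : ℤ) - 2 ∧ p = msf A i j},
      d (Xm A 1 0 * g) = y) := by
  have key3 : ∀ g ∈ Submodule.span A
      {p : Lau A | ∃ i j : ℤ, 0 ≤ i ∧ i ≤ j ∧ j ≤ (m : ℤ) - 2 ∧ p = msf A i j},
      psi A (d (Xm A 1 0 * g)) = g := by
    intro g hg
    induction hg using Submodule.span_induction with
    | mem x hx =>
      obtain ⟨i, j, h0, hij, hjm, rfl⟩ := hx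
      exact psi_phi A d hd i j hij
    | zero => simp
    | add x y hx hy ihx ihy => rw [mul_add, map_add, map_add, ihx, ihy]
    | smul a x hx ihx => rw [Algebra.mul_smul_comm, map_smul, map_smul, ihx]
  refine ⟨fun i j _ hij _ => phi_msf A d hd i j hij, ?_, ?_, ?_⟩
  · intro g hg
    induction hg using Submodule.span_induction with
    | mem x hx =>
      obtain ⟨i, j, h0, hij, hjm, rfl⟩ := hx
      rw [phi_msf A d hd i j hij]
      split_ifs with h1
      · exact neg_mem (Submodule.subset_span ⟨i, j+1, h0, by omega, by omega, rfl⟩)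
      · exact add_mem (neg_mem (Submodule.subset_span ⟨i, j+1, h0, by omega, by omega, rfl⟩))
          (Submodule.subset_span ⟨i+1, j, by omega, by omega, by omega, rfl⟩)
    | zero => simp
    | add x y hx hy ihx ihy => rw [mul_add, map_add]; exact add_mem ihx ihy
    | smul a x hx ihx => rw [Algebra.mul_smul_comm, map_smul]; exact Submodule.smul_mem _ _ ihx
  · intro g hg g' hg' heq
    have := key3 g hg
    rw [heq, key3 g' hg'] at this
    exact this.symm
  · intro y hy
    refine ⟨psi A y, ?_, ?_⟩
    · induction hy using Submodule.span_induction with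
      | mem x hx =>
        obtain ⟨i, j, h0, hij, hjm, rfl⟩ := hx
        rw [psi_Xm]
        exact psiMono_mem A ((m : ℤ)) (j - i).toNat i j le_rfl h0 hij hjm
      | zero => simp
      | add x y hx hy ihx ihy => rw [map_add]; exact add_mem ihx ihy
      | smul a x hx ihx => rw [map_smul]; exact Submodule.smul_mem _ _ ihx
    · induction hy using Submodule.span_induction with
      | mem x hx =>
        obtain ⟨i, j, h0, hij, hjm, rfl⟩ := hx
        rw [psi_Xm]
        exact phi_psi A d hd (j - i).toNat i j le_rfl hij
      | zero => simp
      | add x y hx hy ihx ihy => rw [map_add, mul_add, map_add, ihx, ihy]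
      | smul a x hx ihx => rw [map_smul, Algebra.mul_smul_comm, map_smul, ihx]
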